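/- Let S and A be types, γ ∈ (0,1), δ > 0, ε ≥ 0. Let Q : S × A → ℝ, r : S × A → ℝ, V : S → ℝ, f : S × A → S satisfy Q(s,a) = r(s,a) + γ·V(f(s,a)) for all s, a, and suppose V is δ-separable, i.e. |V(s) − V(x)| > δ for all s ≠ x. Let Q̂ : S × A → ℝ and V̂ : S → ℝ satisfy |Q̂(s,a) − Q(s,a)| ≤ ε for all s, a and |V̂(x) − V(x)| ≤ ε for all x. If ε < δ/(2/γ + 2), then for every s ∈ S and a ∈ A, the successor state f(s,a) is the strict minimizer of x ↦ |V̂(x) − (Q̂(s,a) − r(s,a))/γ|: for every x ≠ f(s,a), |V̂(x) − (Q̂(s,a) − r(s,a))/γ| > |V̂(f(s,a)) − (Q̂(s,a) − r(s,a))/γ|. -/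

import Mathlib

/-- Theorem 2 (Successor-State Identifiability): if the true value function is
δ-separable and `ε < δ / (2/γ + 2)`, then the true successor state is the strict
minimizer of the distance between the estimated value and the scanned value. -/
theorem stmt_3 {S A : Type*} (γ δ ε : ℝ)
    (hγ0 : 0 < γ) (hγ1 : γ < 1) (hδ : 0 < δ) (hε : 0 ≤ ε)
    (Q r : S × A → ℝ) (V : S → ℝ) (f : S × A → S)
    (hbell : ∀ s a, Q (s, a) = r (s, a) + γ * V (f (s, a)))
    (hsep : ∀ s x : S, s ≠ x → δ < |V s - V x|)
    (Qhat : S × A → ℝ) (Vhat : S → ℝ)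
    (hQ : ∀ s a, |Qhat (s, a) - Q (s, a)| ≤ ε)
    (hVe : ∀ x, |Vhat x - V x| ≤ ε)
    (hεδ : ε < δ / (2 / γ + 2)) :
    ∀ (s : S) (a : A) (x : S), x ≠ f (s, a) →
      |Vhat (f (s, a)) - (Qhat (s, a) - r (s, a)) / γ| <
        |Vhat x - (Qhat (s, a) - r (s, a)) / γ| := by
  intro s a x hx
  set t : ℝ := (Qhat (s, a) - r (s, a)) / γ with ht
  have hpos : 0 < 2 / γ + 2 := by positivity
  have hεγ : ε * (2 / γ + 2) < δ := (lt_div_iff₀ hpos).mp hεδ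
  -- |t - V(f(s,a))| ≤ ε/γ
  have htf : |t - V (f (s, a))| ≤ ε / γ := by
    have : t - V (f (s, a)) = (Qhat (s, a) - Q (s, a)) / γ := by
      rw [ht, hbell s a]; field_simp; ring
    rw [this, abs_div, abs_of_pos hγ0]
    gcongr
    exact hQ s a
  have h1 : |Vhat (f (s, a)) - t| ≤ ε + ε / γ := by
    calc |Vhat (f (s, a)) - t|
        = |(Vhat (f (s, a)) - V (f (s, a))) - (t - V (f (s, a)))| := by ring_nf
      _ ≤ |Vhat (f (s, a)) - V (f (s, a))| + |t - V (f (s, a))| := abs_sub _ _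
      _ ≤ ε + ε / γ := add_le_add (hVe _) htf
  have hsep' := hsep x (f (s, a)) hx
  have h2 : δ - (ε + ε / γ) < |Vhat x - t| := by
    have : |V x - V (f (s, a))| ≤ |Vhat x - t| + |Vhat x - V x| + |t - V (f (s, a))| := by
      calc |V x - V (f (s, a))|
          = |(Vhat x - t) - (Vhat x - V x) + (t - V (f (s, a)))| := by ring_nf
        _ ≤ |(Vhat x - t) - (Vhat x - V x)| + |t - V (f (s, a))| := abs_add_le _ _
        _ ≤ |Vhat x - t| + |Vhat x - V x| + |t - V (f (s, a))| :=
            add_le_add_left (abs_sub _ _) _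
    have h3 : δ < |Vhat x - t| + ε + ε / γ := by
      have := hsep'.trans_le this
      linarith [hVe x, htf]
    linarith
  have hgap : ε * (2 / γ + 2) = 2 * (ε + ε / γ) := by field_simp; ring
  have : 2 * (ε + ε / γ) < δ := by rw [← hgap]; exact hεγ
  linarith
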